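/- Let k be a field, A a unital associative k-algebra, and u ∈ A. If u admits a Jordan–Chevalley decomposition (d, s), then u is separable: there exists a nonzero annihilating polynomial of u all of whose monic irreducible factors are separable. (Indeed, if p is the minimal polynomial of d, then p(u) is nilpotent, so p^m annihilates u for some m ≥ 1, and every irreducible factor of p^m divides the separable polynomial p.) -/

import Mathlib

open Polynomial

/-- An element of a `k`-algebra is absolutely semisimple if it has a separable
annihilating polynomial. -/
def AbsSemisimple (k : Type*) [Field k] {A : Type*} [Ring A] [Algebra k A] (u : A) : Prop :=
  ∃ f : k[X], f.Separable ∧ aeval u f = 0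

/-- A Jordan–Chevalley decomposition of `u` is a pair `(d, s)` with `d` absolutely
semisimple, `s` nilpotent, `u = d + s` and `d s = s d`. -/
def IsJordanChevalley (k : Type*) [Field k] {A : Type*} [Ring A] [Algebra k A]
    (u d s : A) : Prop :=
  AbsSemisimple k d ∧ IsNilpotent s ∧ u = d + s ∧ d * s = s * d

private lemma pow_key {A : Type*} [Ring A] {d s : A} (h : Commute d s) (n : ℕ) :
    ∃ c : A, (d + s) ^ n = d ^ n + s * c ∧ Commute s c ∧ Commute d c := by
  induction n with
  | zero => exact ⟨0, by simp, Commute.zero_right s, Commute.zero_right d⟩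
  | succ n ih =>
    obtain ⟨c, hc, hsc, hdc⟩ := ih
    refine ⟨d ^ n + (c * d + c * s), ?_, ?_, ?_⟩
    · have hds : s * d ^ n = d ^ n * s := (h.symm.pow_right n).eq
      rw [pow_succ, hc, pow_succ, add_mul, mul_add, mul_add, mul_add, mul_add]
      rw [← mul_assoc, ← mul_assoc]
      rw [hds]
      noncomm_ring
    · exact ((h.symm.pow_right n).add_right ((hsc.mul_right h.symm).add_right (hsc.mul_right (Commute.refl s))))
    · exact (((Commute.refl d).pow_right n).add_right ((hdc.mul_right (Commute.refl d)).add_right (hdc.mul_right h)))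

private lemma aeval_key {k : Type*} [Field k] {A : Type*} [Ring A] [Algebra k A]
    {d s : A} (h : Commute d s) (f : k[X]) :
    ∃ c : A, aeval (d + s) f = aeval d f + s * c ∧ Commute s c := by
  induction f using Polynomial.induction_on' with
  | add p q hp hq =>
    obtain ⟨c1, h1, hs1⟩ := hp
    obtain ⟨c2, h2, hs2⟩ := hq
    exact ⟨c1 + c2, by rw [map_add, map_add, h1, h2, mul_add]; abel, hs1.add_right hs2⟩
  | monomial n a =>
    obtain ⟨c, hc, hsc, _⟩ := pow_key h n
    refine ⟨a • c, ?_, hsc.smul_right a⟩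
    rw [aeval_monomial, aeval_monomial, hc, mul_add, mul_smul_comm]
    congr 1
    rw [Algebra.smul_def]

theorem separable_of_jordan_chevalley
    {k : Type*} [Field k] {A : Type*} [Ring A] [Algebra k A]
    (u d s : A) (hds : IsJordanChevalley k u d s) :
    ∃ p : k[X], p ≠ 0 ∧ aeval u p = 0 ∧
      ∀ q : k[X], q.Monic → Irreducible q → q ∣ p → q.Separable := by
  obtain ⟨⟨f, hfsep, hfd⟩, hsnil, rfl, hcomm⟩ := hds
  obtain ⟨c, hc, hsc⟩ := aeval_key (k := k) (hcomm : Commute d s) f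
  have hnil : IsNilpotent (aeval (d + s) f) := by
    rw [hc, hfd, zero_add]
    exact hsc.isNilpotent_mul_right hsnil
  obtain ⟨m, hm⟩ := hnil
  refine ⟨f ^ (m + 1), pow_ne_zero _ hfsep.ne_zero, ?_, ?_⟩
  · rw [map_pow, pow_succ, hm, zero_mul]
  · intro q _ hq hdvd
    exact hfsep.of_dvd (hq.prime.dvd_of_dvd_pow hdvd)
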